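/- Let I ⊆ ℝ be an interval and γ : I → ℝ² a unit-speed curve of class C³, and for s, t ∈ I set Z(s,t) := (κ(s)/2)·‖γ(s) − γ(t)‖² − ⟨γ(s) − γ(t), ν(s)⟩. Then for every s in the interior of I, the function t ↦ Z(s,t) satisfies Z(s,s) = 0, (∂Z/∂t)(s,t)|_{t=s} = 0, (∂²Z/∂t²)(s,t)|_{t=s} = 0, and (∂³Z/∂t³)(s,t)|_{t=s} = −κ'(s). -/

import Mathlib

open Real Set

noncomputable section

/-- The second derivative of a plane curve, componentwise. -/
def d2 (γ : ℝ → ℝ × ℝ) (s : ℝ) : ℝ × ℝ :=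
  (deriv (fun u => (deriv γ u).1) s, deriv (fun u => (deriv γ u).2) s)

/-- The outward unit normal `ν(s) = (γ'₂(s), −γ'₁(s))` of a unit-speed plane curve. -/
def nor (γ : ℝ → ℝ × ℝ) (s : ℝ) : ℝ × ℝ := ((deriv γ s).2, -(deriv γ s).1)

/-- The geodesic curvature `κ(s) = γ'₁(s)·γ''₂(s) − γ'₂(s)·γ''₁(s)` of a unit-speed
plane curve. -/
def curv (γ : ℝ → ℝ × ℝ) (s : ℝ) : ℝ :=
  (deriv γ s).1 * (d2 γ s).2 - (deriv γ s).2 * (d2 γ s).1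

/-- Euclidean inner product on `ℝ²`. -/
def dot (v w : ℝ × ℝ) : ℝ := v.1 * w.1 + v.2 * w.2

/-- Squared Euclidean norm on `ℝ²`. -/
def nsq (v : ℝ × ℝ) : ℝ := v.1 ^ 2 + v.2 ^ 2

lemma ladder (g : ℝ → ℝ) (hg : ContDiff ℝ 3 g) :
    Differentiable ℝ g ∧ Differentiable ℝ (deriv g) ∧ Differentiable ℝ (deriv (deriv g)) := by
  have h2 : ContDiff ℝ 2 (deriv g) :=
    (contDiff_succ_iff_deriv.mp (show ContDiff ℝ (2+1) g by exact_mod_cast hg)).2.2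
  have h1 : ContDiff ℝ 1 (deriv (deriv g)) :=
    (contDiff_succ_iff_deriv.mp (show ContDiff ℝ (1+1) (deriv g) by exact_mod_cast h2)).2.2
  exact ⟨hg.differentiable (by norm_num), h2.differentiable (by norm_num),
    h1.differentiable (by norm_num)⟩

/-- For a unit-speed `C³` curve on an interval `I`, the function
`Z(s,t) = (κ(s)/2)·‖γ(s) − γ(t)‖² − ⟨γ(s) − γ(t), ν(s)⟩` satisfies, for `s` in the
interior of `I`: `Z(s,s) = 0`, `∂Z/∂t(s,s) = 0`, `∂²Z/∂t²(s,s) = 0`, and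
`∂³Z/∂t³(s,s) = −κ'(s)`. -/
theorem stmt1 (I : Set ℝ) (hI : Convex ℝ I) (γ : ℝ → ℝ × ℝ)
    (hsm : ContDiff ℝ 3 γ)
    (hunit : ∀ s ∈ I, nsq (deriv γ s) = 1)
    (Z : ℝ → ℝ → ℝ)
    (hZ : ∀ s t, Z s t =
      curv γ s / 2 * nsq (γ s - γ t) - dot (γ s - γ t) (nor γ s)) :
    ∀ s ∈ interior I,
      Z s s = 0 ∧
      deriv (Z s) s = 0 ∧
      deriv (deriv (Z s)) s = 0 ∧
      deriv (deriv (deriv (Z s))) s = - deriv (curv γ) s := by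
  set g1 : ℝ → ℝ := fun u => (γ u).1 with hg1def
  set g2 : ℝ → ℝ := fun u => (γ u).2 with hg2def
  obtain ⟨d1a, d1b, d1c⟩ := ladder g1 hsm.fst
  obtain ⟨d2a, d2b, d2c⟩ := ladder g2 hsm.snd
  -- deriv γ componentwise
  have hγ' : ∀ u, HasDerivAt γ (deriv g1 u, deriv g2 u) u := fun u =>
    ((d1a u).hasDerivAt.prodMk ((d2a u).hasDerivAt))
  have hderivγ : ∀ u, deriv γ u = (deriv g1 u, deriv g2 u) := fun u => (hγ' u).deriv
  have e1 : (fun u => (deriv γ u).1) = deriv g1 := funext fun u => by rw [hderivγ]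
  have e2 : (fun u => (deriv γ u).2) = deriv g2 := funext fun u => by rw [hderivγ]
  have hcurv : curv γ = fun u =>
      deriv g1 u * deriv (deriv g2) u - deriv g2 u * deriv (deriv g1) u := by
    funext u
    simp only [curv, d2, hderivγ u, e1, e2]
  intro s hs
  have hsI : s ∈ I := interior_subset hs
  -- shorthand constants
  set n1 : ℝ := deriv g2 s with hn1
  set n2 : ℝ := -deriv g1 s with hn2
  set c : ℝ := curv γ s / 2 with hc
  -- explicit form of Z s
  have hZfun : Z s = fun t =>
      c * ((g1 s - g1 t) ^ 2 + (g2 s - g2 t) ^ 2) -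
        ((g1 s - g1 t) * n1 + (g2 s - g2 t) * n2) := by
    funext t
    rw [hZ s t]
    simp only [nsq, dot, nor, Prod.fst_sub, Prod.snd_sub, hderivγ s, hc, hn1, hn2]
    rfl
  -- first derivative
  have hD1 : ∀ t, HasDerivAt (Z s)
      (deriv g1 t * n1 + deriv g2 t * n2 -
        2 * c * ((g1 s - g1 t) * deriv g1 t + (g2 s - g2 t) * deriv g2 t)) t := by
    intro t
    rw [hZfun]
    have h := (((((hasDerivAt_const t (g1 s)).sub (d1a t).hasDerivAt).pow 2).add
        (((hasDerivAt_const t (g2 s)).sub (d2a t).hasDerivAt).pow 2)).const_mul c).sub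
      (((((hasDerivAt_const t (g1 s)).sub (d1a t).hasDerivAt).const_mul n1).add
        ((((hasDerivAt_const t (g2 s)).sub (d2a t).hasDerivAt)).const_mul n2)))
    convert h using 1
    · rfl
    · rfl
    · funext u; simp only [Pi.sub_apply, Pi.add_apply, Pi.mul_apply, Pi.pow_apply, Pi.neg_apply]; ring
    · simp only [Pi.sub_apply, Pi.add_apply, Pi.mul_apply, Pi.pow_apply, Pi.neg_apply]; ring
  have hZ1 : deriv (Z s) = fun t =>
      deriv g1 t * n1 + deriv g2 t * n2 -
        2 * c * ((g1 s - g1 t) * deriv g1 t + (g2 s - g2 t) * deriv g2 t) :=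
    funext fun t => (hD1 t).deriv
  -- second derivative
  have hD2 : ∀ t, HasDerivAt (deriv (Z s))
      (deriv (deriv g1) t * n1 + deriv (deriv g2) t * n2 -
        2 * c * (-(deriv g1 t) ^ 2 + (g1 s - g1 t) * deriv (deriv g1) t +
          (-(deriv g2 t) ^ 2 + (g2 s - g2 t) * deriv (deriv g2) t))) t := by
    intro t
    rw [hZ1]
    have h := ((((d1b t).hasDerivAt.const_mul n1).add
        ((d2b t).hasDerivAt.const_mul n2)).sub
      (((((hasDerivAt_const t (g1 s)).sub (d1a t).hasDerivAt).mul (d1b t).hasDerivAt).add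
        (((hasDerivAt_const t (g2 s)).sub (d2a t).hasDerivAt).mul (d2b t).hasDerivAt)).const_mul
        (2 * c)))
    convert h using 1
    · rfl
    · rfl
    · funext u; simp only [Pi.sub_apply, Pi.add_apply, Pi.mul_apply, Pi.pow_apply, Pi.neg_apply]; ring
    · simp only [Pi.sub_apply, Pi.add_apply, Pi.mul_apply, Pi.pow_apply, Pi.neg_apply]; ring
  have hZ2 : deriv (deriv (Z s)) = fun t =>
      deriv (deriv g1) t * n1 + deriv (deriv g2) t * n2 -
        2 * c * (-(deriv g1 t) ^ 2 + (g1 s - g1 t) * deriv (deriv g1) t +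
          (-(deriv g2 t) ^ 2 + (g2 s - g2 t) * deriv (deriv g2) t)) :=
    funext fun t => (hD2 t).deriv
  -- third derivative
  have hD3 : ∀ t, HasDerivAt (deriv (deriv (Z s)))
      (deriv (deriv (deriv g1)) t * n1 + deriv (deriv (deriv g2)) t * n2 -
        2 * c * (-(3 * (deriv g1 t * deriv (deriv g1) t)) +
            (g1 s - g1 t) * deriv (deriv (deriv g1)) t +
          (-(3 * (deriv g2 t * deriv (deriv g2) t)) +
            (g2 s - g2 t) * deriv (deriv (deriv g2)) t))) t := by
    intro t
    rw [hZ2]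
    have h := ((((d1c t).hasDerivAt.const_mul n1).add
        ((d2c t).hasDerivAt.const_mul n2)).sub
      ((((((d1b t).hasDerivAt.pow 2).neg).add
          (((hasDerivAt_const t (g1 s)).sub (d1a t).hasDerivAt).mul (d1c t).hasDerivAt)).add
        ((((d2b t).hasDerivAt.pow 2).neg).add
          (((hasDerivAt_const t (g2 s)).sub (d2a t).hasDerivAt).mul (d2c t).hasDerivAt))).const_mul
        (2 * c)))
    convert h using 1
    · rfl
    · rfl
    · funext u; simp only [Pi.sub_apply, Pi.add_apply, Pi.mul_apply, Pi.pow_apply, Pi.neg_apply]; ring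
    · simp only [Pi.sub_apply, Pi.add_apply, Pi.mul_apply, Pi.pow_apply, Pi.neg_apply]; ring
  -- orthogonality at s : g1' g1'' + g2' g2'' = 0
  have horth : deriv g1 s * deriv (deriv g1) s + deriv g2 s * deriv (deriv g2) s = 0 := by
    have hloc : (fun u => deriv g1 u ^ 2 + deriv g2 u ^ 2) =ᶠ[nhds s] fun _ => (1 : ℝ) := by
      filter_upwards [isOpen_interior.mem_nhds hs] with u hu
      have := hunit u (interior_subset hu)
      simpa [nsq, hderivγ u] using this
    have h0 : deriv (fun u => deriv g1 u ^ 2 + deriv g2 u ^ 2) s = 0 := by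
      rw [Filter.EventuallyEq.deriv_eq hloc]
      simp
    have h1 : HasDerivAt (fun u => deriv g1 u ^ 2 + deriv g2 u ^ 2)
        (2 * deriv g1 s ^ (2-1) * deriv (deriv g1) s +
          2 * deriv g2 s ^ (2-1) * deriv (deriv g2) s) s :=
      (((d1b s).hasDerivAt.pow 2).add ((d2b s).hasDerivAt.pow 2))
    have := h1.deriv
    rw [h0] at this
    norm_num at this
    linarith [this]
  -- unit speed at s
  have hu1 : deriv g1 s ^ 2 + deriv g2 s ^ 2 = 1 := by
    have := hunit s hsI
    simpa [nsq, hderivγ s] using this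
  -- curvature as explicit expression and its derivative
  have hcs : curv γ s = deriv g1 s * deriv (deriv g2) s - deriv g2 s * deriv (deriv g1) s := by
    rw [hcurv]
  have hdcurv : deriv (curv γ) s =
      deriv g1 s * deriv (deriv (deriv g2)) s - deriv g2 s * deriv (deriv (deriv g1)) s := by
    rw [hcurv]
    have h := (((d1b s).hasDerivAt.mul (d2c s).hasDerivAt).sub
      ((d2b s).hasDerivAt.mul (d1c s).hasDerivAt)).deriv
    exact h.trans (by ring)
  refine ⟨?_, ?_, ?_, ?_⟩
  · rw [hZ s s]; simp [nsq, dot]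
  · rw [(hD1 s).deriv]; simp [hn1, hn2]; ring
  · rw [(hD2 s).deriv]
    simp only [sub_self, zero_mul, add_zero, zero_add]
    rw [hn1, hn2, hc]
    linear_combination (curv γ s) * hu1 + hcs
  · rw [(hD3 s).deriv, hdcurv]
    simp only [sub_self, zero_mul, add_zero]
    rw [hn1, hn2, hc]
    linear_combination (3 * curv γ s) * horth

end
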